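/- For n ≥ 1 and variables Z = (Z₁,...,Z_{n-1}), define F_n(p, Z) = ∑_{I ⊆ [n-1]} b_{n,I}(p^{-1}) ∏_{i∈I} Z_i/(1 - Z_i), where b_{n,I}(p) is the product of Gaussian binomials for the flag type I. Then F_n(p^{-1}, Z^{-1}) = (-1)^{n-1} p^{C(n,2)} F_n(p, Z), as an identity of rational functions in p and the Z_i. -/

import Mathlib

/-- Gaussian binomial coefficient `binom(a,b)_q = ∏_{i=0}^{b-1} (q^a - q^i)/(q^b - q^i)`. -/
noncomputable def gbinomR (q : ℝ) (a b : ℕ) : ℝ :=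
  ∏ i ∈ Finset.range b, (q ^ a - q ^ i) / (q ^ b - q ^ i)

/-- `b_{n,I}(q) = binom(n,i_m)_q · binom(i_m,i_{m-1})_q ··· binom(i₂,i₁)_q` for
`I = {i₁ < ... < i_m}`. -/
noncomputable def bnI (q : ℝ) (n : ℕ) (I : Finset ℕ) : ℝ :=
  let l := I.sort (· ≤ ·)
  ∏ r ∈ Finset.range l.length, gbinomR q (l.getD (r + 1) n) (l.getD r 0)

/-- `F_n(p, Z) = ∑_{I ⊆ [n-1]} b_{n,I}(p⁻¹) ∏_{i∈I} Z_i/(1 - Z_i)`. -/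
noncomputable def Fn (p : ℝ) (n : ℕ) (Z : ℕ → ℝ) : ℝ :=
  ∑ I ∈ (Finset.Icc 1 (n - 1)).powerset,
    bnI p⁻¹ n I * ∏ i ∈ I, Z i / (1 - Z i)

/-- The functional equation `F_n(p⁻¹, Z⁻¹) = (-1)^{n-1} p^{C(n,2)} F_n(p, Z)`,
stated for all real `p > 1` and all `Z_i ∉ {0,1}` (a Zariski-dense set of
specializations, hence equivalent to the identity of rational functions). -/


noncomputable def psiQ (q : ℝ) (m : ℕ) : ℝ :=
  ∏ i ∈ Finset.range m, (q ^ (i + 1) - 1)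

lemma pow_ne_powQ {q : ℝ} (hq0 : 0 < q) (hq1 : q ≠ 1) {a b : ℕ} (hab : a ≠ b) :
    q ^ a ≠ q ^ b := by
  rcases lt_or_gt_of_ne hq1 with h | h
  · rcases lt_or_gt_of_ne hab with h2 | h2
    · exact ne_of_gt (pow_lt_pow_right_of_lt_one₀ hq0 h h2)
    · exact ne_of_lt (pow_lt_pow_right_of_lt_one₀ hq0 h h2)
  · rcases lt_or_gt_of_ne hab with h2 | h2
    · exact ne_of_lt (pow_lt_pow_right₀ h h2)
    · exact ne_of_gt (pow_lt_pow_right₀ h h2)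

lemma psiQ_ne_zero {q : ℝ} (hq0 : 0 < q) (hq1 : q ≠ 1) (m : ℕ) : psiQ q m ≠ 0 := by
  refine Finset.prod_ne_zero_iff.2 fun i _ => sub_ne_zero.2 ?_
  simpa using pow_ne_powQ hq0 hq1 (a := i + 1) (b := 0) (by omega)

lemma psiQ_succ (q : ℝ) (m : ℕ) : psiQ q (m + 1) = psiQ q m * (q ^ (m + 1) - 1) := by
  simp [psiQ, Finset.prod_range_succ]

lemma gbinomR_zero_right (q : ℝ) (a : ℕ) : gbinomR q a 0 = 1 := by simp [gbinomR]

lemma gbinomR_eq_zero (q : ℝ) {a b : ℕ} (h : a < b) : gbinomR q a b = 0 := by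
  refine Finset.prod_eq_zero (Finset.mem_range.2 h) ?_
  simp

lemma gbinomR_eq_psi {q : ℝ} (hq0 : 0 < q) (hq1 : q ≠ 1) {a b : ℕ} (h : b ≤ a) :
    gbinomR q a b = psiQ q a / (psiQ q b * psiQ q (a - b)) := by
  have hne : ∀ m : ℕ, (q:ℝ) ^ m ≠ 0 := fun m => pow_ne_zero _ (ne_of_gt hq0)
  have key : ∀ i < b, (q ^ a - q ^ i) / (q ^ b - q ^ i)
      = (q ^ (a - i) - 1) / (q ^ (b - i) - 1) := by
    intro i hi
    have h1 : q ^ a - q ^ i = q ^ i * (q ^ (a - i) - 1) := by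
      rw [mul_sub, mul_one, ← pow_add]; congr 2; omega
    have h2 : q ^ b - q ^ i = q ^ i * (q ^ (b - i) - 1) := by
      rw [mul_sub, mul_one, ← pow_add]; congr 2; omega
    rw [h1, h2, mul_div_mul_left _ _ (hne i)]
  have hmain : gbinomR q a b = (∏ i ∈ Finset.range b, (q ^ (a - i) - 1)) /
      (∏ i ∈ Finset.range b, (q ^ (b - i) - 1)) := by
    rw [gbinomR, ← Finset.prod_div_distrib]
    exact Finset.prod_congr rfl fun i hi => key i (Finset.mem_range.1 hi)
  rw [hmain]
  have hden : (∏ i ∈ Finset.range b, (q ^ (b - i) - 1)) = psiQ q b := by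
    rw [psiQ, ← Finset.prod_range_reflect]
    refine Finset.prod_congr rfl fun i hi => ?_
    have := Finset.mem_range.1 hi
    congr 2; omega
  have hnum : (∏ i ∈ Finset.range b, (q ^ (a - i) - 1)) = psiQ q a / psiQ q (a - b) := by
    have hsplit : psiQ q a = psiQ q (a - b) * ∏ i ∈ Finset.range b, (q ^ (a - b + i + 1) - 1) := by
      conv_lhs => rw [psiQ, show a = (a - b) + b by omega, Finset.prod_range_add]
      rw [psiQ]
    have hrefl : (∏ i ∈ Finset.range b, (q ^ (a - b + i + 1) - 1))
        = ∏ i ∈ Finset.range b, (q ^ (a - i) - 1) := by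
      rw [← Finset.prod_range_reflect]
      refine Finset.prod_congr rfl fun i hi => ?_
      have := Finset.mem_range.1 hi
      congr 2; omega
    rw [hrefl] at hsplit
    rw [hsplit]
    field_simp [psiQ_ne_zero hq0 hq1]
  rw [hden, hnum, div_div, mul_comm (psiQ q (a-b))]

lemma gbinomR_self {q : ℝ} (hq0 : 0 < q) (hq1 : q ≠ 1) (a : ℕ) : gbinomR q a a = 1 := by
  rw [gbinomR_eq_psi hq0 hq1 le_rfl, Nat.sub_self]
  have : psiQ q 0 = 1 := by simp [psiQ]
  rw [this, mul_one, div_self (psiQ_ne_zero hq0 hq1 a)]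

lemma choose_two_add (k t : ℕ) : (k + t).choose 2 = k.choose 2 + t.choose 2 + k * t := by
  induction t with
  | zero => simp
  | succ t ih =>
    have h2 : ∀ m : ℕ, (m + 1).choose 2 = m.choose 2 + m := by
      intro m
      rw [Nat.choose_succ_succ, Nat.choose_one_right, Nat.add_comm]
    rw [show (k + (t+1)) = (k + t) + 1 by omega, h2, ih, h2]
    ring

lemma gbinomR_pascal {q : ℝ} (hq0 : 0 < q) (hq1 : q ≠ 1) (a b : ℕ) :
    gbinomR q (a + 1) (b + 1) = gbinomR q a (b + 1) + q ^ (a - b) * gbinomR q a b := by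
  have hψ := psiQ_ne_zero hq0 hq1
  rcases lt_trichotomy b a with h | h | h
  · obtain ⟨d, rfl⟩ : ∃ d, a = b + (d + 1) := ⟨a - b - 1, by omega⟩
    rw [gbinomR_eq_psi hq0 hq1 (by omega), gbinomR_eq_psi hq0 hq1 (by omega),
        gbinomR_eq_psi hq0 hq1 (by omega)]
    rw [show b + (d + 1) + 1 - (b + 1) = d + 1 by omega,
        show b + (d + 1) - (b + 1) = d by omega,
        show b + (d + 1) - b = d + 1 by omega]
    rw [mul_div_assoc']
    rw [div_add_div _ _ (mul_ne_zero (hψ (b+1)) (hψ d)) (mul_ne_zero (hψ b) (hψ (d+1)))]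
    rw [div_eq_div_iff (mul_ne_zero (hψ (b+1)) (hψ (d+1)))
        (mul_ne_zero (mul_ne_zero (hψ (b+1)) (hψ d)) (mul_ne_zero (hψ b) (hψ (d+1))))]
    rw [show b + (d + 1) + 1 = (b + (d + 1)) + 1 from rfl, psiQ_succ q (b + (d+1)),
        psiQ_succ q d, psiQ_succ q b]
    ring
  · subst h
    rw [gbinomR_self hq0 hq1, gbinomR_eq_zero q (by omega), gbinomR_self hq0 hq1]
    simp
  · rw [gbinomR_eq_zero q (by omega), gbinomR_eq_zero q (by omega),
        gbinomR_eq_zero q (by omega)]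
    simp

lemma gbinomR_alt_rec {q : ℝ} (hq0 : 0 < q) (hq1 : q ≠ 1) (m : ℕ) :
    ∑ t ∈ Finset.range (m + 1 + 1), (-1:ℝ)^t * q^(t.choose 2) * gbinomR q (m+1) t
    = (1 - q^m) * ∑ t ∈ Finset.range (m+1), (-1:ℝ)^t * q^(t.choose 2) * gbinomR q m t := by
  rw [Finset.sum_range_succ' (fun t => (-1:ℝ)^t * q^(t.choose 2) * gbinomR q (m+1) t) (m+1)]
  have B : ∀ i ∈ Finset.range (m+1),
      (-1:ℝ)^(i+1) * q^((i+1).choose 2) * gbinomR q (m+1) (i+1)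
      = (-1:ℝ)^(i+1) * q^((i+1).choose 2) * gbinomR q m (i+1)
        + (-(q^m)) * ((-1:ℝ)^i * q^(i.choose 2) * gbinomR q m i) := by
    intro i hi
    have him := Finset.mem_range.1 hi
    rw [gbinomR_pascal hq0 hq1 m i]
    have hqq : (q:ℝ)^((i+1).choose 2) * q^(m-i) = q^(i.choose 2) * q^m := by
      rw [← pow_add, ← pow_add]
      congr 1
      have : (i+1).choose 2 = i.choose 2 + i := by
        rw [Nat.choose_succ_succ, Nat.choose_one_right, Nat.add_comm]
      omega
    linear_combination ((-1:ℝ)^(i+1) * gbinomR q m i) * hqq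
  rw [Finset.sum_congr rfl B, Finset.sum_add_distrib, ← Finset.mul_sum]
  have C : ∑ i ∈ Finset.range (m+1), (-1:ℝ)^(i+1) * q^((i+1).choose 2) * gbinomR q m (i+1)
      = ∑ i ∈ Finset.range m, (-1:ℝ)^(i+1) * q^((i+1).choose 2) * gbinomR q m (i+1) := by
    rw [Finset.sum_range_succ, gbinomR_eq_zero q (by omega), mul_zero, add_zero]
  have D : ∑ t ∈ Finset.range (m+1), (-1:ℝ)^t * q^(t.choose 2) * gbinomR q m t
      = ∑ i ∈ Finset.range m, (-1:ℝ)^(i+1) * q^((i+1).choose 2) * gbinomR q m (i+1) + 1 := by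
    rw [Finset.sum_range_succ' (fun t => (-1:ℝ)^t * q^(t.choose 2) * gbinomR q m t) m]
    simp [gbinomR_zero_right]
  rw [C, D]
  have hf0 : (-1:ℝ)^0 * q^(Nat.choose 0 2) * gbinomR q (m+1) 0 = 1 := by
    simp [gbinomR_zero_right]
  rw [hf0]
  ring

lemma gbinomR_alt_sum {q : ℝ} (hq0 : 0 < q) (hq1 : q ≠ 1) {m : ℕ} (hm : 1 ≤ m) :
    ∑ t ∈ Finset.range (m + 1), (-1 : ℝ) ^ t * q ^ t.choose 2 * gbinomR q m t = 0 := by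
  obtain ⟨m', rfl⟩ : ∃ m', m = m' + 1 := ⟨m - 1, by omega⟩
  induction m' with
  | zero =>
    rw [gbinomR_alt_rec hq0 hq1 0]
    norm_num [gbinomR_zero_right]
  | succ k ih =>
    rw [gbinomR_alt_rec hq0 hq1 (k+1), ih (by omega), mul_zero]

lemma gbinomR_inv {q : ℝ} (hq0 : 0 < q) (hq1 : q ≠ 1) (a b : ℕ) :
    gbinomR q⁻¹ a b = q ^ (b * b) * (q ^ (a * b))⁻¹ * gbinomR q a b := by
  have hqne : (q:ℝ) ≠ 0 := ne_of_gt hq0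
  have hpne : ∀ m : ℕ, (q:ℝ) ^ m ≠ 0 := fun m => pow_ne_zero _ hqne
  have key : ∀ i ∈ Finset.range b, ((q⁻¹) ^ a - (q⁻¹) ^ i) / ((q⁻¹) ^ b - (q⁻¹) ^ i)
      = (q ^ b * (q ^ a)⁻¹) * ((q ^ a - q ^ i) / (q ^ b - q ^ i)) := by
    intro i hi
    have hib : i < b := Finset.mem_range.1 hi
    have hden : q ^ b - q ^ i ≠ 0 := sub_ne_zero.2 (pow_ne_powQ hq0 hq1 (by omega))
    have ha' : (q⁻¹:ℝ) ^ a - (q⁻¹) ^ i = -(q ^ a - q ^ i) * ((q:ℝ) ^ (a + i))⁻¹ := by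
      rw [inv_pow, inv_pow, pow_add]
      field_simp
      ring
    have hb' : (q⁻¹:ℝ) ^ b - (q⁻¹) ^ i = -(q ^ b - q ^ i) * ((q:ℝ) ^ (b + i))⁻¹ := by
      rw [inv_pow, inv_pow, pow_add]
      field_simp
      ring
    rw [ha', hb']
    have h6 : -(q ^ b - q ^ i) * ((q:ℝ) ^ (b + i))⁻¹ ≠ 0 :=
      mul_ne_zero (neg_ne_zero.2 hden) (inv_ne_zero (hpne _))
    rw [div_eq_iff h6]
    field_simp
    ring
  rw [gbinomR, Finset.prod_congr rfl key, Finset.prod_mul_distrib, ← gbinomR]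
  rw [Finset.prod_const, Finset.card_range]
  rw [mul_pow, ← pow_mul, ← inv_pow, ← pow_mul]
  ring_nf

lemma gbinomR_trinomial {q : ℝ} (hq0 : 0 < q) (hq1 : q ≠ 1) {n j k : ℕ} (hk : k ≤ j) :
    gbinomR q n j * gbinomR q j k = gbinomR q n k * gbinomR q (n - k) (j - k) := by
  have hψ := psiQ_ne_zero hq0 hq1
  rcases le_or_gt j n with hjn | hjn
  · rw [gbinomR_eq_psi hq0 hq1 hjn, gbinomR_eq_psi hq0 hq1 hk,
        gbinomR_eq_psi hq0 hq1 (le_trans hk hjn),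
        gbinomR_eq_psi hq0 hq1 (by omega : j - k ≤ n - k)]
    rw [show n - k - (j - k) = n - j by omega]
    rw [div_mul_div_comm, div_mul_div_comm]
    rw [div_eq_div_iff
        (mul_ne_zero (mul_ne_zero (hψ j) (hψ (n-j))) (mul_ne_zero (hψ k) (hψ (j-k))))
        (mul_ne_zero (mul_ne_zero (hψ k) (hψ (n-k))) (mul_ne_zero (hψ (j-k)) (hψ (n-j))))]
    ring
  · rcases le_or_gt k n with hkn | hkn
    · rw [gbinomR_eq_zero q hjn, gbinomR_eq_zero q (by omega : n - k < j - k)]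
      ring
    · rw [gbinomR_eq_zero q hjn, gbinomR_eq_zero q hkn]
      ring

lemma gbinomR_key {q : ℝ} (hq0 : 0 < q) (hq1 : q ≠ 1) {n k : ℕ} (hk : k < n) :
    ∑ j ∈ Finset.range (n + 1),
      (-1:ℝ)^j * q^(j.choose 2) * gbinomR q n j * gbinomR q⁻¹ j k = 0 := by
  have hpne : ∀ m : ℕ, (q:ℝ) ^ m ≠ 0 := fun m => pow_ne_zero _ (ne_of_gt hq0)
  have hq0' : 0 < q⁻¹ := inv_pos.2 hq0
  have hq1' : (q:ℝ)⁻¹ ≠ 1 := by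
    intro h
    exact hq1 (by rw [← inv_inv q, h, inv_one])
  rw [Finset.range_eq_Ico, ← Finset.sum_Ico_consecutive _ (Nat.zero_le k) (by omega : k ≤ n + 1)]
  have hlow : ∑ j ∈ Finset.Ico 0 k, (-1:ℝ)^j * q^(j.choose 2) * gbinomR q n j * gbinomR q⁻¹ j k = 0 := by
    refine Finset.sum_eq_zero fun j hj => ?_
    have : j < k := (Finset.mem_Ico.1 hj).2
    rw [gbinomR_eq_zero q⁻¹ this, mul_zero]
  rw [hlow, zero_add, Finset.sum_Ico_eq_sum_range]
  have hnk : n + 1 - k = (n - k) + 1 := by omega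
  rw [hnk]
  have hterm : ∀ t ∈ Finset.range ((n - k) + 1),
      (-1:ℝ)^(k+t) * q^((k+t).choose 2) * gbinomR q n (k+t) * gbinomR q⁻¹ (k+t) k
      = ((-1:ℝ)^k * q^(k.choose 2) * gbinomR q n k)
        * ((-1:ℝ)^t * q^(t.choose 2) * gbinomR q (n-k) t) := by
    intro t _
    have e1 := gbinomR_inv hq0 hq1 (k+t) k
    have e2 : gbinomR q n (k+t) * gbinomR q (k+t) k = gbinomR q n k * gbinomR q (n-k) t := by
      have := gbinomR_trinomial hq0 hq1 (n := n) (j := k+t) (k := k) (by omega)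
      rwa [show k + t - k = t by omega] at this
    have hcomb : q^((k+t).choose 2) * (q^(k*k) * ((q:ℝ)^((k+t)*k))⁻¹)
        = q^(k.choose 2) * q^(t.choose 2) := by
      rw [← div_eq_mul_inv, mul_div_assoc', div_eq_iff (hpne _)]
      rw [← pow_add, ← pow_add, ← pow_add]
      congr 1
      rw [choose_two_add]
      ring
    have step : (-1:ℝ)^(k+t) * q^((k+t).choose 2) * gbinomR q n (k+t) * gbinomR q⁻¹ (k+t) k
        = ((-1:ℝ)^k * (-1:ℝ)^t) * (q^((k+t).choose 2) * (q^(k*k) * ((q:ℝ)^((k+t)*k))⁻¹))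
          * (gbinomR q n (k+t) * gbinomR q (k+t) k) := by
      rw [e1, pow_add]
      ring
    rw [step, hcomb, e2]
    ring
  rw [Finset.sum_congr rfl hterm, ← Finset.mul_sum]
  rw [gbinomR_alt_sum hq0 hq1 (by omega : 1 ≤ n - k), mul_zero]


lemma bnI_empty (q : ℝ) (n : ℕ) : bnI q n (∅ : Finset ℕ) = 1 := by
  simp [bnI]

lemma sort_max_eq {I : Finset ℕ} {j : ℕ} (hj : j ∈ I) (hmax : ∀ x ∈ I, x ≤ j) :
    I.sort (· ≤ ·) = (I.erase j).sort (· ≤ ·) ++ [j] := by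
  refine (fun hp h1 h2 => List.Perm.eq_of_pairwise' (r := (· ≤ ·)) h1 h2 hp) ?_ ?_ ?_
  · rw [← Multiset.coe_eq_coe]
    rw [Finset.sort_eq]
    have : ((I.erase j).sort (· ≤ ·) ++ [j] : Multiset ℕ)
        = ((I.erase j).sort (· ≤ ·) : Multiset ℕ) + ([j] : Multiset ℕ) := by
      rfl
    rw [this, Finset.sort_eq, Finset.erase_val]
    rw [add_comm]
    have : ([j] : Multiset ℕ) + I.val.erase j = j ::ₘ I.val.erase j := rfl
    rw [this, Multiset.cons_erase (by simpa using hj)]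
  · exact Finset.pairwise_sort _ _
  · refine List.pairwise_append.2 ⟨Finset.pairwise_sort _ _, List.pairwise_singleton _ j, ?_⟩
    intro a ha b hb
    rw [List.mem_singleton] at hb
    rw [hb]
    have : a ∈ I.erase j := (Finset.mem_sort _).1 ha
    exact hmax a (Finset.mem_of_mem_erase this)

lemma bnI_peel (q : ℝ) (n : ℕ) {I : Finset ℕ} {j : ℕ} (hj : j ∈ I) (hmax : ∀ x ∈ I, x ≤ j) :
    bnI q n I = gbinomR q n j * bnI q j (I.erase j) := by
  have hs := sort_max_eq hj hmax
  set l' := (I.erase j).sort (· ≤ ·) with hl'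
  set m := l'.length with hm
  have hlen : (I.sort (· ≤ ·)).length = m + 1 := by rw [hs]; simp [hm]
  rw [bnI, bnI]
  simp only [hlen, ← hl']
  rw [Finset.prod_range_succ]
  have hlast1 : (I.sort (· ≤ ·)).getD (m + 1) n = n := by
    apply List.getD_eq_default
    omega
  have hlast0 : (I.sort (· ≤ ·)).getD m 0 = j := by
    rw [hs, List.getD_append_right _ _ _ _ (le_refl m)]
    simp [hm]
  rw [hlast1, hlast0]
  rw [mul_comm]
  congr 1
  apply Finset.prod_congr rfl
  intro r hr
  have hrm : r < m := Finset.mem_range.1 hr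
  have h0 : (I.sort (· ≤ ·)).getD r 0 = l'.getD r 0 := by
    rw [hs, List.getD_append _ _ _ _ hrm]
  have h1 : (I.sort (· ≤ ·)).getD (r + 1) n = l'.getD (r + 1) j := by
    rcases lt_or_eq_of_le (Nat.succ_le_of_lt hrm) with h | h
    · rw [hs, List.getD_append _ _ _ _ h]
      simp [List.getD_eq_getElem?_getD, List.getElem?_eq_getElem h]
    · have h2 : l'.getD (r + 1) j = j := List.getD_eq_default _ _ (by omega)
      rw [h2, hs, List.getD_append_right _ _ _ _ (by omega : l'.length ≤ r + 1)]
      rw [show r + 1 - l'.length = 0 by omega]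
      simp
  rw [h0, h1]

lemma sup_mem_of_nonempty {I : Finset ℕ} (hI : I.Nonempty) : I.sup id ∈ I := by
  have h1 : I.max' hI = I.sup' hI id := rfl
  have h2 : I.sup' hI id = I.sup id := Finset.sup'_eq_sup hI id
  have := I.max'_mem hI
  rwa [h1, h2] at this

lemma neg_one_pow_pred {m : ℕ} (hm : 1 ≤ m) : (-1:ℝ)^m = -(-1:ℝ)^(m-1) := by
  obtain ⟨m', rfl⟩ : ∃ m', m = m' + 1 := ⟨m - 1, by omega⟩
  simp only [Nat.add_sub_cancel, pow_succ]
  ring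

theorem main_claim {q : ℝ} (hq0 : 0 < q) (hq1 : q ≠ 1) :
    ∀ n : ℕ, 1 ≤ n → ∀ J : Finset ℕ, J ⊆ Finset.Icc 1 (n-1) →
    ∑ I ∈ (Finset.Icc 1 (n-1)).powerset.filter (J ⊆ ·), (-1:ℝ)^I.card * bnI q n I
    = (-1:ℝ)^(n-1) * q^(n.choose 2) * bnI q⁻¹ n J := by
  have hq0' : 0 < q⁻¹ := inv_pos.2 hq0
  have hq1' : (q:ℝ)⁻¹ ≠ 1 := fun h => hq1 (by rw [← inv_inv q, h, inv_one])
  intro n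
  induction n using Nat.strong_induction_on with
  | _ n IH =>
  intro hn J hJ
  set A := Finset.Icc 1 (n-1) with hA
  set k := J.sup id with hk
  -- basic facts about k
  have hkub : ∀ x ∈ J, x ≤ k := fun x hx => Finset.le_sup (f := id) hx
  have hkA : J ≠ ∅ → k ∈ A := by
    intro hJne
    exact hJ (sup_mem_of_nonempty (Finset.nonempty_iff_ne_empty.2 hJne))
  have hkmem : J ≠ ∅ → k ∈ J := fun hJne => sup_mem_of_nonempty (Finset.nonempty_iff_ne_empty.2 hJne)
  set C := bnI q⁻¹ k (J.erase k) with hC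
  have hCempty : J = ∅ → C = 1 := by
    intro h; rw [hC, h]; simp [bnI_empty]
  -- the v function
  set v : ℕ → ℝ := fun j => (-1:ℝ)^j * q^(j.choose 2) * gbinomR q n j * gbinomR q⁻¹ j k * C with hv
  have hvj : ∀ j, v j = (-1:ℝ)^j * q^(j.choose 2) * gbinomR q n j * gbinomR q⁻¹ j k * C :=
    fun _ => rfl
  -- Step 1: split empty / nonempty
  rw [← Finset.sum_filter_add_sum_filter_not (A.powerset.filter (J ⊆ ·)) (· = ∅)]
  -- empty part
  have hempty : ∑ I ∈ (A.powerset.filter (J ⊆ ·)).filter (· = ∅),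
      (-1:ℝ)^I.card * bnI q n I = v 0 := by
    by_cases hJe : J = ∅
    · have hset : (A.powerset.filter (J ⊆ ·)).filter (· = ∅) = {∅} := by
        ext I
        simp only [Finset.mem_filter, Finset.mem_powerset, Finset.mem_singleton]
        constructor
        · rintro ⟨_, h⟩; exact h
        · rintro rfl; simp [hJe]
      rw [hset, Finset.sum_singleton]
      have hk0 : k = 0 := by rw [hk, hJe]; simp
      rw [hvj 0, hk0, hCempty hJe]
      simp [bnI_empty, gbinomR_zero_right]
    · have hset : (A.powerset.filter (J ⊆ ·)).filter (· = ∅) = ∅ := by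
        apply Finset.filter_eq_empty_iff.2
        intro I hI hIe
        apply hJe
        rw [Finset.mem_filter] at hI
        have := hI.2
        rw [hIe] at this
        exact Finset.subset_empty.1 this
      rw [hset, Finset.sum_empty, hvj 0]
      have hk1 : 1 ≤ k := by
        have := hkA hJe
        rw [hA, Finset.mem_Icc] at this
        omega
      rw [gbinomR_eq_zero q⁻¹ (by omega : 0 < k)]
      ring
  rw [hempty]
  -- nonempty part: reindex by (max, rest)
  have hnonempty : ∑ I ∈ (A.powerset.filter (J ⊆ ·)).filter (fun I => ¬ I = ∅),
      (-1:ℝ)^I.card * bnI q n I = ∑ j ∈ A, v j := by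
    have hbij : ∑ I ∈ (A.powerset.filter (J ⊆ ·)).filter (fun I => ¬ I = ∅),
        (-1:ℝ)^I.card * bnI q n I
        = ∑ x ∈ A.sigma (fun j => (Finset.Icc 1 (j-1)).powerset.filter (J.erase j ⊆ ·)),
          (-1:ℝ)^(x.2.card + 1) * (gbinomR q n x.1 * bnI q x.1 x.2) := by
      apply Finset.sum_nbij' (i := fun I => (⟨I.sup id, I.erase (I.sup id)⟩ : Σ _ : ℕ, Finset ℕ))
        (j := fun x => insert x.1 x.2)
      · -- maps into sigma
        intro I hI
        simp only [Finset.mem_filter, Finset.mem_powerset] at hI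
        obtain ⟨⟨hIA, hJI⟩, hIne⟩ := hI
        have hInonempty : I.Nonempty := Finset.nonempty_iff_ne_empty.2 hIne
        have hjmem : I.sup id ∈ I := sup_mem_of_nonempty hInonempty
        rw [Finset.mem_sigma]
        dsimp only
        constructor
        · exact hIA hjmem
        · rw [Finset.mem_filter, Finset.mem_powerset]
          constructor
          · intro x hx
            have hxI := Finset.mem_of_mem_erase hx
            have hxne := Finset.ne_of_mem_erase hx
            have hxA := hIA hxI
            rw [hA, Finset.mem_Icc] at hxA
            have hxk : x ≤ I.sup id := Finset.le_sup (f := id) hxI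
            rw [Finset.mem_Icc]
            omega
          · exact Finset.erase_subset_erase _ hJI
      · -- maps back
        intro x hx
        rw [Finset.mem_sigma, Finset.mem_filter, Finset.mem_powerset] at hx
        obtain ⟨hjA, hI'sub, hJsub⟩ := hx
        simp only [Finset.mem_filter, Finset.mem_powerset]
        have hjA' := hjA
        rw [hA, Finset.mem_Icc] at hjA'
        refine ⟨⟨?_, ?_⟩, ?_⟩
        · intro y hy
          rw [Finset.mem_insert] at hy
          rcases hy with rfl | hy
          · exact hjA
          · have := hI'sub hy
            rw [Finset.mem_Icc] at this
            rw [hA, Finset.mem_Icc]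
            omega
        · intro y hy
          by_cases hyx : y = x.1
          · rw [hyx]; exact Finset.mem_insert_self _ _
          · apply Finset.mem_insert_of_mem
            exact hJsub (Finset.mem_erase.2 ⟨hyx, hy⟩)
        · simp
      · -- left inverse
        intro I hI
        simp only [Finset.mem_filter] at hI
        exact Finset.insert_erase (sup_mem_of_nonempty (Finset.nonempty_iff_ne_empty.2 hI.2))
      · -- right inverse
        intro x hx
        rw [Finset.mem_sigma, Finset.mem_filter, Finset.mem_powerset] at hx
        obtain ⟨hjA, hI'sub, hJsub⟩ := hx
        have hjA' := hjA
        rw [hA, Finset.mem_Icc] at hjA'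
        have hxnotin : x.1 ∉ x.2 := by
          intro hmem
          have := hI'sub hmem
          rw [Finset.mem_Icc] at this
          omega
        have hsup : (insert x.1 x.2).sup id = x.1 := by
          rw [Finset.sup_insert]
          have : x.2.sup id ≤ x.1 := by
            apply Finset.sup_le
            intro y hy
            have := hI'sub hy
            rw [Finset.mem_Icc] at this
            simp only [id]
            omega
          simpa using sup_eq_left.2 this
        have herase : (insert x.1 x.2).erase x.1 = x.2 := Finset.erase_insert hxnotin
        ext
        · rw [hsup]
        · rw [hsup, herase]
      · -- values agree
        intro I hI
        simp only [Finset.mem_filter, Finset.mem_powerset] at hI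
        obtain ⟨⟨hIA, hJI⟩, hIne⟩ := hI
        have hInonempty : I.Nonempty := Finset.nonempty_iff_ne_empty.2 hIne
        have hjmem : I.sup id ∈ I := sup_mem_of_nonempty hInonempty
        have hcard : I.card = (I.erase (I.sup id)).card + 1 := by
          rw [Finset.card_erase_of_mem hjmem]
          have : 1 ≤ I.card := Finset.card_pos.2 hInonempty
          omega
        rw [bnI_peel q n hjmem (fun x hx => Finset.le_sup (f := id) hx), hcard]
    rw [hbij, Finset.sum_sigma]
    apply Finset.sum_congr rfl
    intro j hjA
    show _ = v j
    have hjA' := hjA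
    rw [hA, Finset.mem_Icc] at hjA'
    have hstep : ∑ I' ∈ (Finset.Icc 1 (j-1)).powerset.filter (J.erase j ⊆ ·),
        (-1:ℝ)^(I'.card + 1) * (gbinomR q n j * bnI q j I')
        = (-(gbinomR q n j)) * ∑ I' ∈ (Finset.Icc 1 (j-1)).powerset.filter (J.erase j ⊆ ·),
            (-1:ℝ)^I'.card * bnI q j I' := by
      rw [Finset.mul_sum]
      apply Finset.sum_congr rfl
      intro I' _
      ring
    rw [hstep]
    by_cases hcond : J.erase j ⊆ Finset.Icc 1 (j-1)
    · rw [IH j (by omega) (by omega) (J.erase j) hcond]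
      -- now v j analysis
      by_cases hJe : J = ∅
      · have hk0 : k = 0 := by rw [hk, hJe]; simp
        have hje : J.erase j = ∅ := by rw [hJe]; simp
        rw [hje, bnI_empty, hvj j, hk0, hCempty hJe, gbinomR_zero_right q⁻¹ j,
          neg_one_pow_pred (by omega : 1 ≤ j)]
        ring
      · have hk1 : 1 ≤ k := by
          have := hkA hJe
          rw [hA, Finset.mem_Icc] at this
          omega
        rcases lt_trichotomy j k with hjk | hjk | hjk
        · -- j < k : but then cond fails; contradiction
          exfalso
          have hkJ : k ∈ J.erase j := Finset.mem_erase.2 ⟨by omega, hkmem hJe⟩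
          have := hcond hkJ
          rw [Finset.mem_Icc] at this
          omega
        · -- j = k
          subst hjk
          rw [hvj k, gbinomR_self hq0' hq1', ← hC, neg_one_pow_pred hk1]
          ring
        · -- j > k
          have hjJ : j ∉ J := fun h => by have := hkub j h; omega
          have hje : J.erase j = J := Finset.erase_eq_of_notMem hjJ
          have hpeel : bnI q⁻¹ j J = gbinomR q⁻¹ j k * C := by
            rw [hC, bnI_peel q⁻¹ j (hkmem hJe) hkub]
          rw [hje, hpeel, hvj j, neg_one_pow_pred (by omega : 1 ≤ j)]
          ring
    · -- cond fails: the filter is empty, and v j = 0 because j < k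
      have hset : (Finset.Icc 1 (j-1)).powerset.filter (J.erase j ⊆ ·) = ∅ := by
        apply Finset.filter_eq_empty_iff.2
        intro I' hI'
        rw [Finset.mem_powerset] at hI'
        intro hsub
        exact hcond (hsub.trans hI')
      rw [hset, Finset.sum_empty, mul_zero]
      -- show v j = 0
      have hJe : J ≠ ∅ := by
        intro h
        apply hcond
        rw [h]
        simp
      have hjk : j < k := by
        by_contra hge
        push_neg at hge
        apply hcond
        intro x hx
        rw [Finset.mem_erase] at hx
        have hx2 := hkub x hx.2
        have hx3 := hJ hx.2
        rw [hA, Finset.mem_Icc] at hx3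
        rw [Finset.mem_Icc]
        rcases lt_or_eq_of_le (le_trans hx2 hge) with h | h
        · omega
        · exact absurd h hx.1
      rw [hvj j, gbinomR_eq_zero q⁻¹ hjk]
      ring
  rw [hnonempty]
  -- assemble: v 0 + ∑_{j ∈ A} v j = ∑_{j ∈ range n} v j = -(v n) = RHS
  have hsplit : v 0 + ∑ j ∈ A, v j = ∑ j ∈ Finset.range n, v j := by
    have hIccIco : Finset.Icc 1 (n-1) = Finset.Ico 1 n := by
      rw [← Finset.Ico_add_one_right_eq_Icc]
      congr 1
      omega
    rw [Finset.range_eq_Ico, Finset.sum_eq_sum_Ico_succ_bot (by omega : 0 < n), hA, hIccIco]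
  rw [hsplit]
  have hkey : ∑ j ∈ Finset.range (n+1), v j = 0 := by
    have hkn : k < n := by
      by_cases hJe : J = ∅
      · rw [hk, hJe]; simpa using (by omega : 0 < n)
      · have := hkA hJe
        rw [hA, Finset.mem_Icc] at this
        omega
    have := gbinomR_key hq0 hq1 hkn
    calc ∑ j ∈ Finset.range (n+1), v j
        = (∑ j ∈ Finset.range (n+1),
            (-1:ℝ)^j * q^(j.choose 2) * gbinomR q n j * gbinomR q⁻¹ j k) * C := by
          rw [Finset.sum_mul]
      _ = 0 := by rw [this, zero_mul]
  have hlast : ∑ j ∈ Finset.range n, v j = -(v n) := by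
    have := Finset.sum_range_succ v n
    rw [hkey] at this
    linarith
  rw [hlast, hvj n, gbinomR_self hq0 hq1]
  have hfin : gbinomR q⁻¹ n k * C = bnI q⁻¹ n J := by
    by_cases hJe : J = ∅
    · have hk0 : k = 0 := by rw [hk, hJe]; simp
      rw [hk0, hCempty hJe, gbinomR_zero_right, hJe, bnI_empty]
      norm_num
    · rw [hC, ← bnI_peel q⁻¹ n (hkmem hJe) hkub]
  have hsign : -(-1:ℝ)^n = (-1:ℝ)^(n-1) := by
    rw [neg_one_pow_pred hn]
    ring
  rw [show -((-1:ℝ)^n * q^(n.choose 2) * 1 * gbinomR q⁻¹ n k * C)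
      = (-(-1:ℝ)^n) * q^(n.choose 2) * (gbinomR q⁻¹ n k * C) from by ring,
    hsign, hfin]


lemma sum_powerset_swap {A : Finset ℕ} (F : Finset ℕ → Finset ℕ → ℝ) :
    ∑ I ∈ A.powerset, ∑ K ∈ I.powerset, F I K
    = ∑ K ∈ A.powerset, ∑ I ∈ A.powerset.filter (K ⊆ ·), F I K := by
  rw [Finset.sum_sigma' A.powerset (fun I => I.powerset) (fun I K => F I K),
      Finset.sum_sigma' A.powerset (fun K => A.powerset.filter (K ⊆ ·)) (fun K I => F I K)]
  apply Finset.sum_nbij' (i := fun x => (⟨x.2, x.1⟩ : Σ _ : Finset ℕ, Finset ℕ))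
    (j := fun x => (⟨x.2, x.1⟩ : Σ _ : Finset ℕ, Finset ℕ))
  · intro x hx
    rw [Finset.mem_sigma, Finset.mem_powerset] at hx
    rw [Finset.mem_sigma, Finset.mem_powerset, Finset.mem_filter, Finset.mem_powerset]
    have hKI : x.2 ⊆ x.1 := Finset.mem_powerset.1 hx.2
    exact ⟨hKI.trans hx.1, hx.1, hKI⟩
  · intro x hx
    rw [Finset.mem_sigma, Finset.mem_powerset, Finset.mem_filter, Finset.mem_powerset] at hx
    rw [Finset.mem_sigma, Finset.mem_powerset]
    exact ⟨hx.2.1, Finset.mem_powerset.2 hx.2.2⟩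
  · intro x _; rfl
  · intro x _; rfl
  · intro x _; rfl

theorem Fn_functional_equation (n : ℕ) (hn : 1 ≤ n) (p : ℝ) (hp : 1 < p)
    (Z : ℕ → ℝ) (hZ0 : ∀ i, Z i ≠ 0) (hZ1 : ∀ i, Z i ≠ 1) :
    Fn p⁻¹ n (fun i => (Z i)⁻¹) = (-1) ^ (n - 1) * p ^ n.choose 2 * Fn p n Z := by
  have hp0 : 0 < p := lt_trans one_pos hp
  have hp1 : p ≠ 1 := ne_of_gt hp
  simp only [Fn, inv_inv]
  have hz : ∀ i, (Z i)⁻¹ / (1 - (Z i)⁻¹) = -1 * (1 + Z i / (1 - Z i)) := by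
    intro i
    have h0 := hZ0 i
    have h1 : (1:ℝ) - Z i ≠ 0 := sub_ne_zero.2 (Ne.symm (hZ1 i))
    have h2 : (1:ℝ) - (Z i)⁻¹ ≠ 0 := by
      rw [sub_ne_zero]
      intro h
      exact hZ1 i (by rw [← inv_inv (Z i), ← h, inv_one])
    rw [div_eq_iff h2]
    field_simp
    ring
  have hprod : ∀ I : Finset ℕ, (∏ i ∈ I, (Z i)⁻¹ / (1 - (Z i)⁻¹))
      = (-1:ℝ)^I.card * ∑ K ∈ I.powerset, ∏ i ∈ K, Z i / (1 - Z i) := by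
    intro I
    rw [Finset.prod_congr rfl (fun i _ => hz i), Finset.prod_mul_distrib, Finset.prod_const]
    congr 1
    have hadd := Finset.prod_add (fun i => Z i / (1 - Z i)) (fun _ => (1:ℝ)) I
    simp only [Finset.prod_const_one, mul_one] at hadd
    rw [← hadd]
    apply Finset.prod_congr rfl
    intro i _
    ring
  calc ∑ I ∈ (Finset.Icc 1 (n-1)).powerset, bnI p n I * ∏ i ∈ I, (Z i)⁻¹ / (1 - (Z i)⁻¹)
      = ∑ I ∈ (Finset.Icc 1 (n-1)).powerset, ∑ K ∈ I.powerset,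
          ((-1:ℝ)^I.card * bnI p n I) * ∏ i ∈ K, Z i / (1 - Z i) := by
        apply Finset.sum_congr rfl
        intro I _
        rw [hprod I, ← mul_assoc, mul_comm (bnI p n I) ((-1:ℝ)^I.card), Finset.mul_sum]
    _ = ∑ K ∈ (Finset.Icc 1 (n-1)).powerset,
          ∑ I ∈ (Finset.Icc 1 (n-1)).powerset.filter (K ⊆ ·),
            ((-1:ℝ)^I.card * bnI p n I) * ∏ i ∈ K, Z i / (1 - Z i) := by
        exact sum_powerset_swap (fun I K => ((-1:ℝ)^I.card * bnI p n I) * ∏ i ∈ K, Z i / (1 - Z i))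
    _ = ∑ K ∈ (Finset.Icc 1 (n-1)).powerset,
          ((-1:ℝ)^(n-1) * p^(n.choose 2) * bnI p⁻¹ n K) * ∏ i ∈ K, Z i / (1 - Z i) := by
        apply Finset.sum_congr rfl
        intro K hK
        rw [← Finset.sum_mul, main_claim hp0 hp1 n hn K (Finset.mem_powerset.1 hK)]
    _ = (-1:ℝ)^(n-1) * p^(n.choose 2) * ∑ K ∈ (Finset.Icc 1 (n-1)).powerset,
          bnI p⁻¹ n K * ∏ i ∈ K, Z i / (1 - Z i) := by
        rw [Finset.mul_sum]
        apply Finset.sum_congr rfl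
        intro K _
        ring
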